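/- Let U : ℝ → ℝ be C¹ with U(0) = 0, e^{−U} integrable against e^{−αξ} on each half-line for all α ∈ ℝ, and define ψ⁺(γ) = ∫₀^∞ U'(ξ)e^{−2γξ−U(ξ)} dξ, ψ⁻(γ) = −∫_{−∞}^0 U'(ξ)e^{2γξ−U(ξ)} dξ, and Z(γ) = 1 − ψ⁺(γ)ψ⁻(γ). Then Z(0) = 0 and Z'(0) = 2·∫_{−∞}^∞ e^{−U(ξ)} dξ ≠ 0; in particular 0 is a simple root of Z. -/

import Mathlib

open MeasureTheory Filter

open Set Topology


lemma integral_cofReal {μ : Measure ℝ} {f : ℝ → ℝ} :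
    ∫ x, ((f x : ℝ) : ℂ) ∂μ = ((∫ x, f x ∂μ : ℝ) : ℂ) :=
  integral_ofReal

lemma decay8 (W : ℝ → ℝ) (hmono : MonotoneOn W (Ici 0)) (hW0 : W 0 = 0)
    (hWint : IntegrableOn (fun x => Real.exp (-W x + 8 * x)) (Ioi 0)) :
    ∃ C : ℝ, 0 < C ∧ ∀ x : ℝ, 0 ≤ x → Real.exp (-W x) ≤ C * Real.exp (-8 * x) := by
  set I := ∫ x in Ioi (0:ℝ), Real.exp (-W x + 8 * x) with hI
  have hInn : 0 ≤ I := setIntegral_nonneg measurableSet_Ioi fun t _ => (Real.exp_pos _).le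
  refine ⟨(I + 1) * Real.exp 8, by positivity, ?_⟩
  intro x hx
  rcases le_or_gt x 1 with h1 | h1
  · have hWx : 0 ≤ W x := by
      have := hmono self_mem_Ici hx hx
      rwa [hW0] at this
    have h2 : Real.exp (-W x) ≤ 1 := Real.exp_le_one_iff.2 (by linarith)
    have h3 : (1:ℝ) ≤ Real.exp 8 * Real.exp (-8 * x) := by
      rw [← Real.exp_add]
      have : (0:ℝ) ≤ 8 + -8 * x := by linarith
      simpa using Real.one_le_exp_iff.2 this
    nlinarith [Real.exp_pos (-8*x), Real.exp_pos (8:ℝ)]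
  · have hsub : Ioc (x-1) x ⊆ Ioi (0:ℝ) := fun t ht => lt_of_le_of_lt (by linarith) ht.1
    have key : Real.exp (-W x + 8 * x - 8) * 1 ≤ ∫ t in Ioc (x-1) x, Real.exp (-W t + 8 * t) := by
      have hmeas : (volume (Ioc (x-1) x)).toReal = 1 := by
        rw [Real.volume_Ioc]
        norm_num
      have h1' : Real.exp (-W x + 8 * x - 8) * (volume (Ioc (x-1) x)).toReal ≤ ∫ t in Ioc (x-1) x, Real.exp (-W t + 8 * t) := by
        apply setIntegral_ge_of_const_le_real measurableSet_Ioc (by simp) ?_ (hWint.mono_set hsub)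
        intro t ht
        apply Real.exp_le_exp.2
        have hWt : W t ≤ W x := hmono (mem_Ici.2 (by linarith [ht.1] : (0:ℝ) ≤ t)) (mem_Ici.2 (by linarith)) ht.2
        have := ht.1
        nlinarith
      rw [hmeas] at h1'
      simpa using h1'
    have key2 : ∫ t in Ioc (x-1) x, Real.exp (-W t + 8 * t) ≤ I := by
      apply setIntegral_mono_set hWint
      · exact ae_of_all _ fun t => (Real.exp_pos _).le
      · exact HasSubset.Subset.eventuallyLE hsub
    have : Real.exp (-W x + 8 * x - 8) ≤ I := by linarith
    have hexp : Real.exp (-W x) = Real.exp (-W x + 8 * x - 8) * (Real.exp 8 * Real.exp (-8 * x)) := by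
      rw [← Real.exp_add, ← Real.exp_add]; ring_nf
    rw [hexp]
    have hpos : (0:ℝ) < Real.exp 8 * Real.exp (-8*x) := by positivity
    nlinarith

lemma cexpk (k : ℝ) (hk : 0 < k) (c : ℝ) :
    Tendsto (fun x : ℝ => c * Real.exp (-(k * x))) atTop (𝓝 0) := by
  have h1 : Tendsto (fun x : ℝ => k * x) atTop atTop := tendsto_id.const_mul_atTop hk
  have h2 : Tendsto (fun x : ℝ => Real.exp (-(k * x))) atTop (𝓝 0) :=
    Real.tendsto_exp_atBot.comp (tendsto_neg_atTop_atBot.comp h1)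
  simpa using h2.const_mul c

lemma halfline (W : ℝ → ℝ) (hW : ContDiff ℝ 1 W) (hW0 : W 0 = 0)
    (hW' : ∀ x : ℝ, 0 ≤ x → 0 ≤ deriv W x)
    (hWint : ∀ α : ℝ, IntegrableOn (fun x => Real.exp (-W x + α * x)) (Ioi 0)) :
    (∫ ξ in Ioi (0:ℝ), (Complex.ofReal (deriv W ξ)) * Complex.exp (-2 * (0:ℂ) * ξ - (W ξ : ℂ)) = 1) ∧
    HasDerivAt (fun γ : ℂ => ∫ ξ in Ioi (0:ℝ),
        (Complex.ofReal (deriv W ξ)) * Complex.exp (-2 * γ * ξ - (W ξ : ℂ)))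
      (-2 * Complex.ofReal (∫ ξ in Ioi (0:ℝ), Real.exp (-W ξ))) 0 := by
  have hd : ∀ x : ℝ, HasDerivAt W (deriv W x) x := fun x =>
    ((hW.differentiable one_ne_zero) x).hasDerivAt
  have hW'c : Continuous (deriv W) := hW.continuous_deriv le_rfl
  have hmono : MonotoneOn W (Ici 0) := by
    apply monotoneOn_of_deriv_nonneg (convex_Ici 0) hW.continuous.continuousOn
    · exact fun x _ => ((hW.differentiable one_ne_zero) x).differentiableWithinAt
    · intro x hx
      exact hW' x (le_of_lt (by simpa [interior_Ici] using hx))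
  obtain ⟨C, hC, hCb⟩ := decay8 W hmono hW0 (hWint 8)
  have hWnn : ∀ x : ℝ, 0 ≤ x → 0 ≤ W x := fun x hx => by
    have := hmono self_mem_Ici hx hx; rwa [hW0] at this
  have hhalf : ∀ x : ℝ, 0 ≤ x → Real.exp (-W x / 2 + 4 * x) ≤ Real.sqrt C := by
    intro x hx
    apply Real.le_sqrt_of_sq_le
    have h2 : Real.exp (-W x / 2 + 4 * x) ^ 2 = Real.exp (-W x) * Real.exp (8 * x) := by
      rw [sq, ← Real.exp_add, ← Real.exp_add]; ring_nf
    rw [h2]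
    have h3 := hCb x hx
    have h4 : C * Real.exp (-8*x) * Real.exp (8*x) = C := by
      rw [mul_assoc, ← Real.exp_add]; simp
    nlinarith [Real.exp_pos (8*x), Real.exp_pos (-8*x)]
  -- the dominating core is integrable
  have hb_int : IntegrableOn (fun x => deriv W x * Real.exp (-W x / 2)) (Ioi 0) := by
    have hgd : ∀ x : ℝ, HasDerivAt (fun y => -2 * Real.exp (-W y / 2))
        (deriv W x * Real.exp (-W x / 2)) x := by
      intro x
      have h1 : HasDerivAt (fun y => -W y / 2) (-deriv W x / 2) x := (hd x).neg.div_const 2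
      have h2 := (h1.exp).const_mul (-2 : ℝ)
      exact h2.congr_deriv (by ring)
    have htend : Tendsto (fun x => -2 * Real.exp (-W x / 2)) atTop (𝓝 0) := by
      apply squeeze_zero_norm' ?_ (cexpk 4 (by norm_num) (2 * Real.sqrt C))
      filter_upwards [eventually_ge_atTop (0:ℝ)] with x hx
      have h1 : Real.exp (-W x / 2) = Real.exp (-W x/2 + 4*x) * Real.exp (-(4*x)) := by
        rw [← Real.exp_add]; ring_nf
      have h2 := hhalf x hx
      have h3 : ‖(-2:ℝ) * Real.exp (-W x / 2)‖ = 2 * Real.exp (-W x / 2) := by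
        rw [norm_mul, Real.norm_of_nonneg (Real.exp_nonneg _)]; norm_num
      rw [h3, h1]
      calc 2 * (Real.exp (-W x/2 + 4*x) * Real.exp (-(4*x)))
          ≤ 2 * (Real.sqrt C * Real.exp (-(4*x))) := by
            exact mul_le_mul_of_nonneg_left
              (mul_le_mul_of_nonneg_right h2 (Real.exp_nonneg _)) (by norm_num)
        _ = 2 * Real.sqrt C * Real.exp (-(4*x)) := by ring
    exact integrableOn_Ioi_deriv_of_nonneg' (fun x _ => hgd x)
      (fun x hx => mul_nonneg (hW' x (le_of_lt hx)) (Real.exp_nonneg _)) htend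
  have hexp_int : IntegrableOn (fun x => Real.exp (-W x)) (Ioi 0) := by
    have := hWint 0
    simpa using this
  have htend0 : Tendsto (fun x => Real.exp (-W x)) atTop (𝓝 0) := by
    apply squeeze_zero_norm' ?_ (cexpk 8 (by norm_num) C)
    filter_upwards [eventually_ge_atTop (0:ℝ)] with x hx
    rw [Real.norm_of_nonneg (Real.exp_nonneg _)]
    have := hCb x hx
    have h8 : Real.exp (-8 * x) = Real.exp (-(8*x)) := by ring_nf
    linarith [h8 ▸ this]
  have hxexp : Tendsto (fun x : ℝ => x * Real.exp (-W x)) atTop (𝓝 0) := by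
    have hg : Tendsto (fun x : ℝ => C * (Real.exp (-(7 * x)) * (x * Real.exp (-x)))) atTop (𝓝 0) := by
      have h1 := cexpk 7 (by norm_num) 1
      have h2 := Real.tendsto_pow_mul_exp_neg_atTop_nhds_zero 1
      have := (h1.mul h2).const_mul C
      simpa using this
    apply squeeze_zero_norm' ?_ hg
    filter_upwards [eventually_ge_atTop (0:ℝ)] with x hx
    rw [Real.norm_of_nonneg (mul_nonneg hx (Real.exp_nonneg _))]
    have h1 := hCb x hx
    have hE : Real.exp (-(7 * x)) * Real.exp (-x) = Real.exp (-8 * x) := by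
      rw [← Real.exp_add]; ring_nf
    calc x * Real.exp (-W x) ≤ x * (C * Real.exp (-8 * x)) :=
          mul_le_mul_of_nonneg_left h1 hx
      _ = C * (Real.exp (-(7 * x)) * (x * Real.exp (-x))) := by rw [← hE]; ring
  have hF0 : ∫ x in Ioi (0:ℝ), deriv W x * Real.exp (-W x) = 1 := by
    have hgd : ∀ x : ℝ, HasDerivAt (fun y => -Real.exp (-W y)) (deriv W x * Real.exp (-W x)) x := by
      intro x
      have h2 := ((hd x).neg.exp).neg
      exact h2.congr_deriv (by simp only [Pi.neg_apply]; ring)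
    have := integral_Ioi_of_hasDerivAt_of_nonneg' (fun x _ => hgd x)
      (fun x hx => mul_nonneg (hW' x hx.le) (Real.exp_nonneg _)) (by simpa using htend0.neg)
    rw [this, hW0]
    simp
  have hIBP : ∫ x in Ioi (0:ℝ), x * (deriv W x * Real.exp (-W x))
      = ∫ x in Ioi (0:ℝ), Real.exp (-W x) := by
    have hc : Continuous (fun t => Real.exp (-W t)) := Real.continuous_exp.comp hW.continuous.neg
    have hgd : ∀ x : ℝ, HasDerivAt (fun y => -(y * Real.exp (-W y)) + ∫ t in (0:ℝ)..y, Real.exp (-W t))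
        (x * (deriv W x * Real.exp (-W x))) x := by
      intro x
      have h1 : HasDerivAt (fun y : ℝ => y * Real.exp (-W y))
          (1 * Real.exp (-W x) + x * (Real.exp (-W x) * -deriv W x)) x :=
        (hasDerivAt_id x).mul ((hd x).neg.exp)
      have h2 : HasDerivAt (fun y : ℝ => ∫ t in (0:ℝ)..y, Real.exp (-W t)) (Real.exp (-W x)) x := by
        apply intervalIntegral.integral_hasDerivAt_right
        · exact (hc.intervalIntegrable _ _)
        · exact hc.stronglyMeasurableAtFilter _ _
        · exact hc.continuousAt
      have := h1.neg.add h2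
      exact this.congr_deriv (by ring)
    have htg : Tendsto (fun y => -(y * Real.exp (-W y)) + ∫ t in (0:ℝ)..y, Real.exp (-W t)) atTop
        (𝓝 (0 + ∫ t in Ioi (0:ℝ), Real.exp (-W t))) := by
      apply Tendsto.add
      · simpa using hxexp.neg
      · exact intervalIntegral_tendsto_integral_Ioi 0 hexp_int tendsto_id
    have := integral_Ioi_of_hasDerivAt_of_nonneg' (fun x _ => hgd x)
      (fun x hx => mul_nonneg hx.le (mul_nonneg (hW' x hx.le) (Real.exp_nonneg _))) htg
    rw [this]
    simp
  have hcont : ∀ γ : ℂ, Continuous (fun ξ : ℝ =>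
      (Complex.ofReal (deriv W ξ)) * Complex.exp (-2 * γ * ξ - (W ξ : ℂ))) := by
    intro γ
    apply (Complex.continuous_ofReal.comp hW'c).mul
    apply Complex.continuous_exp.comp
    exact (continuous_const.mul Complex.continuous_ofReal).sub
      (Complex.continuous_ofReal.comp hW.continuous)
  have hnorm : ∀ (γ : ℂ) (ξ : ℝ), ‖Complex.exp (-2 * γ * ξ - (W ξ : ℂ))‖
      = Real.exp (-2 * γ.re * ξ - W ξ) := by
    intro γ ξ
    rw [Complex.norm_exp]
    congr 1
    simp [Complex.sub_re, Complex.mul_re]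
  have key := hasDerivAt_integral_of_dominated_loc_of_deriv_le
      (μ := volume.restrict (Ioi (0:ℝ))) (x₀ := (0:ℂ)) (s := Metric.ball (0:ℂ) 1)
      (F := fun (γ : ℂ) (ξ : ℝ) =>
        (Complex.ofReal (deriv W ξ)) * Complex.exp (-2 * γ * ξ - (W ξ : ℂ)))
      (F' := fun (γ : ℂ) (ξ : ℝ) => (Complex.ofReal (deriv W ξ)) *
        (Complex.exp (-2 * γ * ξ - (W ξ : ℂ)) * (-2 * ξ)))
      (bound := fun ξ => Real.sqrt C * (deriv W ξ * Real.exp (-W ξ / 2)))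
      (Metric.ball_mem_nhds 0 one_pos)
      (Eventually.of_forall fun γ => ((hcont γ).aestronglyMeasurable).restrict)
      ?hFint ?hFmeas' ?hbound (hb_int.const_mul _) ?hdiff
  case hFint =>
    apply Integrable.mono' hb_int (((hcont 0).aestronglyMeasurable).restrict)
    filter_upwards [ae_restrict_mem measurableSet_Ioi] with ξ hξ
    have hξ0 : (0:ℝ) < ξ := hξ
    rw [norm_mul, hnorm 0 ξ, Complex.norm_real, Real.norm_eq_abs,
      abs_of_nonneg (hW' ξ hξ0.le)]
    have h0 : -2 * (0:ℂ).re * ξ - W ξ = -W ξ := by simp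
    rw [h0]
    exact mul_le_mul_of_nonneg_left
      (Real.exp_le_exp.2 (by linarith [hWnn ξ hξ0.le])) (hW' ξ hξ0.le)
  case hFmeas' =>
    apply Continuous.aestronglyMeasurable (?_ : Continuous _) |>.restrict
    exact (Complex.continuous_ofReal.comp hW'c).mul
      ((Complex.continuous_exp.comp ((continuous_const.mul Complex.continuous_ofReal).sub
        (Complex.continuous_ofReal.comp hW.continuous))).mul
        (continuous_const.mul Complex.continuous_ofReal))
  case hbound =>
    filter_upwards [ae_restrict_mem measurableSet_Ioi] with ξ hξ
    intro γ hγ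
    have hξ0 : (0:ℝ) < ξ := hξ
    rw [norm_mul, norm_mul, hnorm γ ξ, Complex.norm_real, Real.norm_eq_abs,
      abs_of_nonneg (hW' ξ hξ0.le)]
    have hb2 : ‖(-2 : ℂ) * (ξ:ℂ)‖ = 2 * ξ := by
      simp [Complex.norm_real, abs_of_nonneg hξ0.le]
    rw [hb2]
    have hγ1 : |γ.re| < 1 := by
      have h2 : ‖γ‖ < 1 := by
        simpa using mem_ball_zero_iff.1 hγ
      exact lt_of_le_of_lt (Complex.abs_re_le_norm γ) h2
    have e1 : Real.exp (-2*γ.re*ξ - W ξ) ≤ Real.exp (2*ξ - W ξ) := by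
      apply Real.exp_le_exp.2
      have := abs_le.1 hγ1.le
      nlinarith [this.1, this.2]
    have e2 : 2*ξ ≤ Real.exp (2*ξ) := by linarith [Real.add_one_le_exp (2*ξ)]
    have e3 : Real.exp (2*ξ) * Real.exp (2*ξ - W ξ)
        = Real.exp (-W ξ/2) * Real.exp (-W ξ/2 + 4*ξ) := by
      rw [← Real.exp_add, ← Real.exp_add]; ring_nf
    have e4 := hhalf ξ hξ0.le
    have e5 : Real.exp (-2*γ.re*ξ - W ξ) * (2*ξ) ≤ Real.sqrt C * Real.exp (-W ξ/2) := by
      calc Real.exp (-2*γ.re*ξ - W ξ) * (2*ξ)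
          ≤ Real.exp (2*ξ - W ξ) * Real.exp (2*ξ) :=
            mul_le_mul e1 e2 (by linarith) (Real.exp_nonneg _)
        _ = Real.exp (-W ξ/2) * Real.exp (-W ξ/2 + 4*ξ) := by rw [mul_comm]; exact e3
        _ ≤ Real.exp (-W ξ/2) * Real.sqrt C :=
            mul_le_mul_of_nonneg_left e4 (Real.exp_nonneg _)
        _ = Real.sqrt C * Real.exp (-W ξ/2) := mul_comm _ _
    calc deriv W ξ * (Real.exp (-2*γ.re*ξ - W ξ) * (2*ξ))
        ≤ deriv W ξ * (Real.sqrt C * Real.exp (-W ξ/2)) :=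
          mul_le_mul_of_nonneg_left e5 (hW' ξ hξ0.le)
      _ = Real.sqrt C * (deriv W ξ * Real.exp (-W ξ/2)) := by ring
  case hdiff =>
    filter_upwards [ae_restrict_mem measurableSet_Ioi] with ξ hξ
    intro γ hγ
    have h1 : HasDerivAt (fun γ : ℂ => -2 * γ * (ξ:ℂ) - (W ξ:ℂ)) (-2 * (ξ:ℂ)) γ := by
      have := (((hasDerivAt_id γ).const_mul (-2:ℂ)).mul_const ((ξ:ℝ):ℂ)).sub_const ((W ξ:ℂ))
      simpa using this
    exact (h1.cexp).const_mul _
  have hfe0 : ∀ ξ : ℝ, (-2 * (0:ℂ) * ξ - (W ξ:ℂ)) = ((-W ξ : ℝ) : ℂ) := by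
    intro ξ; push_cast; ring
  have hF0c : (∫ ξ in Ioi (0:ℝ), (Complex.ofReal (deriv W ξ)) *
      Complex.exp (-2 * (0:ℂ) * ξ - (W ξ : ℂ))) = 1 := by
    have hfequal : (fun ξ : ℝ => (Complex.ofReal (deriv W ξ)) *
        Complex.exp (-2 * (0:ℂ) * ξ - (W ξ : ℂ)))
        = fun ξ : ℝ => (Complex.ofReal (deriv W ξ * Real.exp (-W ξ))) := by
      funext ξ
      rw [hfe0 ξ, ← Complex.ofReal_exp, ← Complex.ofReal_mul]
    rw [hfequal, integral_cofReal, hF0]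
    simp
  refine ⟨hF0c, ?_⟩
  have hval : (∫ ξ in Ioi (0:ℝ), (Complex.ofReal (deriv W ξ)) *
      (Complex.exp (-2 * (0:ℂ) * ξ - (W ξ : ℂ)) * (-2 * ξ)))
      = -2 * Complex.ofReal (∫ ξ in Ioi (0:ℝ), Real.exp (-W ξ)) := by
    have hfequal : (fun ξ : ℝ => (Complex.ofReal (deriv W ξ)) *
        (Complex.exp (-2 * (0:ℂ) * ξ - (W ξ : ℂ)) * (-2 * ξ)))
        = fun ξ : ℝ => (Complex.ofReal ((-2) * (ξ * (deriv W ξ * Real.exp (-W ξ))))) := by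
      funext ξ
      rw [hfe0 ξ, ← Complex.ofReal_exp]
      push_cast
      ring
    rw [hfequal, integral_cofReal, MeasureTheory.integral_const_mul, hIBP]
    push_cast
    ring
  simpa only [hval] using key.2

theorem stmt_6 (U : ℝ → ℝ) (hU : ContDiff ℝ 1 U) (hU0 : U 0 = 0)
    (hUni : ∀ x : ℝ, 0 ≤ x → 0 ≤ deriv U x) (hUni' : ∀ x : ℝ, x ≤ 0 → deriv U x ≤ 0)
    (hInt : ∀ α : ℝ, Integrable (fun x => Real.exp (-U x - α * |x|)))
    (ψp ψm Z : ℂ → ℂ)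
    (hψp : ∀ γ : ℂ, ψp γ =
      ∫ ξ in Set.Ioi (0 : ℝ), (Complex.ofReal (deriv U ξ)) * Complex.exp (-2 * γ * ξ - (U ξ : ℂ)))
    (hψm : ∀ γ : ℂ, ψm γ =
      -∫ ξ in Set.Iio (0 : ℝ), (Complex.ofReal (deriv U ξ)) * Complex.exp (2 * γ * ξ - (U ξ : ℂ)))
    (hZ : ∀ γ : ℂ, Z γ = 1 - ψp γ * ψm γ) :
    Z 0 = 0 ∧ deriv Z 0 = 2 * ∫ ξ : ℝ, (Complex.ofReal (Real.exp (-U ξ))) ∧ deriv Z 0 ≠ 0 := by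
  have hdU : ∀ x, HasDerivAt U (deriv U x) x := fun x => ((hU.differentiable one_ne_zero) x).hasDerivAt
  set V : ℝ → ℝ := fun x => U (-x) with hV
  have hVC : ContDiff ℝ 1 V := hU.comp contDiff_neg
  have hdV : ∀ x : ℝ, HasDerivAt V (-deriv U (-x)) x := by
    intro x
    have h1 := (hdU (-x)).comp x (hasDerivAt_neg x)
    exact h1.congr_deriv (by ring)
  have hVd : ∀ x : ℝ, deriv V x = -deriv U (-x) := fun x => (hdV x).deriv
  have hV' : ∀ x : ℝ, 0 ≤ x → 0 ≤ deriv V x := by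
    intro x hx
    rw [hVd]
    have := hUni' (-x) (by linarith)
    linarith
  have hUintp : ∀ α : ℝ, IntegrableOn (fun x => Real.exp (-U x + α * x)) (Ioi 0) := by
    intro α
    have h1 : IntegrableOn (fun x => Real.exp (-U x - (-α) * |x|)) (Ioi 0) :=
      (hInt (-α)).integrableOn
    apply h1.congr_fun ?_ measurableSet_Ioi
    intro x hx
    simp only [abs_of_pos (mem_Ioi.1 hx)]
    ring_nf
  have hVintp : ∀ α : ℝ, IntegrableOn (fun x => Real.exp (-V x + α * x)) (Ioi 0) := by
    intro α
    have h1 : Integrable (fun x => Real.exp (-U (-x) - (-α) * |(-x)|)) := (hInt (-α)).comp_neg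
    have h2 : IntegrableOn (fun x => Real.exp (-U (-x) - (-α) * |(-x)|)) (Ioi 0) :=
      h1.integrableOn
    apply h2.congr_fun ?_ measurableSet_Ioi
    intro x hx
    simp only [abs_neg, abs_of_pos (mem_Ioi.1 hx), hV]
    ring_nf
  have hψmV : ∀ γ : ℂ, ψm γ = ∫ ξ in Ioi (0:ℝ),
      (Complex.ofReal (deriv V ξ)) * Complex.exp (-2 * γ * ξ - (V ξ : ℂ)) := by
    intro γ
    rw [hψm γ]
    have h1 : (∫ ξ in Iio (0:ℝ), (Complex.ofReal (deriv U ξ)) * Complex.exp (2 * γ * ξ - (U ξ : ℂ)))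
        = ∫ ξ in Ioi (0:ℝ),
          (Complex.ofReal (deriv U (-ξ))) * Complex.exp (2 * γ * ((-ξ : ℝ) : ℂ) - (U (-ξ) : ℂ)) := by
      rw [← integral_Iic_eq_integral_Iio]
      have h2 := integral_comp_neg_Ioi (0:ℝ)
        (fun ξ : ℝ => (Complex.ofReal (deriv U ξ)) * Complex.exp (2 * γ * ξ - (U ξ : ℂ)))
      simp only [neg_zero] at h2
      rw [← h2]
    rw [h1, ← integral_neg]
    congr 1
    funext ξ
    rw [hVd ξ]
    have hz : (2 * γ * ((-ξ : ℝ) : ℂ) - ((U (-ξ) : ℝ) : ℂ))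
        = (-2 * γ * (ξ : ℂ) - ((U (-ξ) : ℝ) : ℂ)) := by push_cast; ring
    rw [hz]
    simp only [hV]
    push_cast
    ring
  obtain ⟨hP0, hPd⟩ := halfline U hU hU0 hUni hUintp
  obtain ⟨hM0, hMd⟩ := halfline V hVC (by simp [hV, hU0]) hV' hVintp
  set Ip : ℝ := ∫ ξ in Ioi (0:ℝ), Real.exp (-U ξ) with hIp
  set Im : ℝ := ∫ ξ in Ioi (0:ℝ), Real.exp (-V ξ) with hIm
  have hZfun : Z = fun γ : ℂ => 1 -
      (∫ ξ in Ioi (0:ℝ), (Complex.ofReal (deriv U ξ)) * Complex.exp (-2 * γ * ξ - (U ξ : ℂ))) *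
      (∫ ξ in Ioi (0:ℝ), (Complex.ofReal (deriv V ξ)) * Complex.exp (-2 * γ * ξ - (V ξ : ℂ))) := by
    funext γ
    rw [hZ γ, hψp γ, hψmV γ]
  have hZd : HasDerivAt Z (-((-2 * (Ip:ℂ)) * 1 + 1 * (-2 * (Im:ℂ)))) 0 := by
    rw [hZfun]
    have h1 := hPd.mul hMd
    simp only [hP0, hM0] at h1
    exact h1.const_sub 1
  have hZderiv : deriv Z 0 = 2 * ((Ip:ℂ) + (Im:ℂ)) := by
    rw [hZd.deriv]; ring
  have hIU : Integrable (fun x => Real.exp (-U x)) := by simpa using hInt 0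
  have hImIic : Im = ∫ ξ in Iic (0:ℝ), Real.exp (-U ξ) := by
    rw [hIm]
    have := integral_comp_neg_Ioi (0:ℝ) (fun ξ : ℝ => Real.exp (-U ξ))
    simp only [neg_zero] at this
    rw [← this]
  have hsplit : (∫ ξ : ℝ, Real.exp (-U ξ)) = Im + Ip := by
    rw [hImIic, hIp]
    exact (intervalIntegral.integral_Iic_add_Ioi hIU.integrableOn hIU.integrableOn).symm
  have hT : 0 < ∫ x : ℝ, Real.exp (-U x) := by
    rw [integral_pos_iff_support_of_nonneg (fun x => (Real.exp_pos _).le) hIU]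
    have : Function.support (fun x : ℝ => Real.exp (-U x)) = Set.univ := by
      ext x; simp [Real.exp_ne_zero]
    rw [this]
    simp
  have hZ0 : Z 0 = 0 := by
    rw [hZ 0, hψp 0, hψmV 0, hP0, hM0]
    norm_num
  have htarget : (∫ ξ : ℝ, (Complex.ofReal (Real.exp (-U ξ)))) = ((Im + Ip : ℝ) : ℂ) := by
    rw [integral_cofReal, hsplit]
  refine ⟨hZ0, ?_, ?_⟩
  · rw [hZderiv, htarget]
    push_cast
    ring
  · rw [hZderiv]
    have hsum : (0:ℝ) < Ip + Im := by
      rw [hsplit] at hT; linarith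
    intro hcon
    have : ((Ip:ℂ) + (Im:ℂ)) = 0 := by
      rcases mul_eq_zero.1 hcon with h | h
      · norm_num at h
      · exact h
    rw [← Complex.ofReal_add] at this
    have := Complex.ofReal_eq_zero.1 this
    linarith
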